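/- The block matrix A = [[0, I], [−K₁, −K₂]] with K₁, K₂ symmetric positive definite is Hurwitz: every eigenvalue of A has strictly negative real part. -/

import Mathlib

open Matrix
set_option maxHeartbeats 1000000

/-- If `μ² + bμ + c = 0` with real `b, c > 0`, then `Re μ < 0`. -/
lemma quad_re_neg_aux (b c : ℝ) (hb : 0 < b) (hc : 0 < c) (μ : ℂ)
    (h : μ ^ 2 + (b : ℂ) * μ + (c : ℂ) = 0) : μ.re < 0 := by
  have hre : μ.re ^ 2 - μ.im ^ 2 + b * μ.re + c = 0 := by
    have := congrArg Complex.re h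
    simp [pow_two, Complex.mul_re, Complex.mul_im] at this
    nlinarith [this]
  have him : μ.im * (2 * μ.re + b) = 0 := by
    have := congrArg Complex.im h
    simp [pow_two, Complex.mul_re, Complex.mul_im] at this
    nlinarith [this]
  rcases mul_eq_zero.mp him with h0 | h0
  · nlinarith [sq_nonneg μ.re]
  · nlinarith

/-- The complex sesquilinear form of a real symmetric matrix takes real values. -/
lemma sesq_real_aux {n : ℕ} (K : Matrix (Fin n) (Fin n) ℝ) (hsym : ∀ i j, K i j = K j i)
    (x : Fin n → ℂ) :
    star x ⬝ᵥ ((K.map (Complex.ofReal ·)) *ᵥ x) =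
      (((fun i => (x i).re) ⬝ᵥ (K *ᵥ fun i => (x i).re)
        + (fun i => (x i).im) ⬝ᵥ (K *ᵥ fun i => (x i).im) : ℝ) : ℂ) := by
  set a : Fin n → ℝ := fun i => (x i).re with ha
  set b : Fin n → ℝ := fun i => (x i).im with hb
  have hS : star x ⬝ᵥ ((K.map (Complex.ofReal ·)) *ᵥ x)
      = ∑ i, ∑ j, (K i j : ℂ) * ((starRingEnd ℂ) (x i) * x j) := by
    simp only [dotProduct, mulVec, Matrix.map_apply, Pi.star_apply, Finset.mul_sum]
    exact Finset.sum_congr rfl fun i _ => Finset.sum_congr rfl fun j _ => by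
      simp [RCLike.star_def]; ring
  have key : ∀ i j : Fin n, (starRingEnd ℂ) (x i) * x j + (starRingEnd ℂ) (x j) * x i
      = ((2 * (a i * a j + b i * b j) : ℝ) : ℂ) := by
    intro i j
    apply Complex.ext <;> simp [Complex.mul_re, Complex.mul_im, ha, hb] <;> ring
  have swap : ∑ i, ∑ j, (K i j : ℂ) * ((starRingEnd ℂ) (x i) * x j)
      = ∑ i, ∑ j, (K i j : ℂ) * ((starRingEnd ℂ) (x j) * x i) := by
    rw [Finset.sum_comm]
    exact Finset.sum_congr rfl fun i _ => Finset.sum_congr rfl fun j _ => by rw [hsym]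
  have two : (2 : ℂ) * (star x ⬝ᵥ ((K.map (Complex.ofReal ·)) *ᵥ x))
      = 2 * ((a ⬝ᵥ (K *ᵥ a) + b ⬝ᵥ (K *ᵥ b) : ℝ) : ℂ) := by
    rw [two_mul, hS]
    nth_rewrite 2 [swap]
    simp only [← Finset.sum_add_distrib, ← mul_add, key]
    push_cast
    simp only [dotProduct, mulVec, Finset.mul_sum]
    push_cast
    simp only [Finset.mul_sum, mul_add, ← Finset.sum_add_distrib]
    exact Finset.sum_congr rfl fun i _ => Finset.sum_congr rfl fun j _ => by ring
  exact mul_left_cancel₀ two_ne_zero two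

/-- The complex quadratic form of a real positive definite matrix is a positive real
on any nonzero complex vector. -/
lemma posdef_complex_aux {n : ℕ} (K : Matrix (Fin n) (Fin n) ℝ) (hK : K.PosDef)
    (x : Fin n → ℂ) (hx : x ≠ 0) :
    ∃ r : ℝ, 0 < r ∧ star x ⬝ᵥ ((K.map (Complex.ofReal ·)) *ᵥ x) = (r : ℂ) := by
  have hsym : ∀ i j, K i j = K j i := fun i j => by
    have := congrFun (congrFun hK.isHermitian.eq j) i
    rw [Matrix.conjTranspose_apply] at this
    simpa using this
  set a : Fin n → ℝ := fun i => (x i).re with ha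
  set b : Fin n → ℝ := fun i => (x i).im with hb
  refine ⟨a ⬝ᵥ (K *ᵥ a) + b ⬝ᵥ (K *ᵥ b), ?_, sesq_real_aux K hsym x⟩
  have hab : a ≠ 0 ∨ b ≠ 0 := by
    by_contra h
    push_neg at h
    apply hx
    funext i
    have h1 := congrFun h.1 i
    have h2 := congrFun h.2 i
    simp [ha, hb] at h1 h2
    exact Complex.ext h1 h2
  have hz1 := hK.posSemidef.dotProduct_mulVec_nonneg a
  have hz2 := hK.posSemidef.dotProduct_mulVec_nonneg b
  simp only [star_trivial, RCLike.re_to_real] at hz1 hz2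
  rcases hab with h | h
  · have := hK.dotProduct_mulVec_pos h
    simp only [star_trivial, RCLike.re_to_real] at this
    linarith
  · have := hK.dotProduct_mulVec_pos h
    simp only [star_trivial, RCLike.re_to_real] at this
    linarith

/-- Every element of the spectrum of a complex matrix has an eigenvector. -/
lemma exists_eigvec_aux {m : Type*} [Fintype m] [DecidableEq m]
    (M : Matrix m m ℂ) (μ : ℂ)
    (h : μ ∈ spectrum ℂ M) : ∃ v : m → ℂ, v ≠ 0 ∧ M *ᵥ v = μ • v := by
  have he : Matrix.toLinAlgEquiv (Pi.basisFun ℂ m) M = Matrix.toLin' M := by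
    rw [← Matrix.toLin_eq_toLin']; rfl
  have h1 : μ ∈ spectrum ℂ (Matrix.toLin' M) := by
    rw [← he, AlgEquiv.spectrum_eq (Matrix.toLinAlgEquiv (Pi.basisFun ℂ m))]
    exact h
  have h2 := Module.End.HasEigenvalue.of_mem_spectrum h1
  obtain ⟨v, hv⟩ := h2.exists_hasEigenvector
  exact ⟨v, hv.2, by rw [← Matrix.toLin'_apply]; exact hv.apply_eq_smul⟩

/-- The block matrix `A = [[0, I], [−K₁, −K₂]]` with `K₁, K₂` symmetric positive
definite is Hurwitz: every (complex) eigenvalue of `A` has strictly negative real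
part. -/
theorem companion_block_hurwitz {n : ℕ} (K₁ K₂ : Matrix (Fin n) (Fin n) ℝ)
    (hK₁ : K₁.PosDef) (hK₂ : K₂.PosDef) :
    ∀ μ ∈ spectrum ℂ
      (((Matrix.fromBlocks 0 1 (-K₁) (-K₂) :
          Matrix (Fin n ⊕ Fin n) (Fin n ⊕ Fin n) ℝ)).map (Complex.ofReal ·)),
      μ.re < 0 := by
  intro μ hμ
  set C₁ : Matrix (Fin n) (Fin n) ℂ := K₁.map (Complex.ofReal ·) with hC₁
  set C₂ : Matrix (Fin n) (Fin n) ℂ := K₂.map (Complex.ofReal ·) with hC₂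
  have hMeq : ((Matrix.fromBlocks 0 1 (-K₁) (-K₂) :
      Matrix (Fin n ⊕ Fin n) (Fin n ⊕ Fin n) ℝ)).map (Complex.ofReal ·)
      = Matrix.fromBlocks 0 1 (-C₁) (-C₂) := by
    ext (i | i) (j | j) <;>
      simp [Matrix.map_apply, Matrix.one_apply, apply_ite, hC₁, hC₂]
  rw [hMeq] at hμ
  obtain ⟨v, hv0, hveq⟩ := exists_eigvec_aux _ μ hμ
  set x : Fin n → ℂ := v ∘ Sum.inl with hx
  set y : Fin n → ℂ := v ∘ Sum.inr with hy
  have hvelim : v = Sum.elim x y := by funext i; cases i <;> rfl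
  rw [hvelim, Matrix.fromBlocks_mulVec] at hveq
  have h1 : y = μ • x := by
    funext i
    have := congrFun hveq (Sum.inl i)
    simpa using this
  have h2 : (-C₁) *ᵥ x + (-C₂) *ᵥ y = μ • y := by
    funext i
    have := congrFun hveq (Sum.inr i)
    simpa using this
  have hxne : x ≠ 0 := by
    intro hx0
    apply hv0
    rw [hvelim, hx0, h1, hx0]
    simp
  -- main vector equation: C₁ x + μ (C₂ x) + μ² x = 0
  have hmain : C₁ *ᵥ x + μ • (C₂ *ᵥ x) + (μ ^ 2) • x = 0 := by
    have h2' : (-C₁) *ᵥ x + (-C₂) *ᵥ (μ • x) = μ • (μ • x) := by rw [← h1]; exact h2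
    rw [Matrix.neg_mulVec, Matrix.neg_mulVec, Matrix.mulVec_smul, smul_smul, ← pow_two] at h2'
    rw [← h2']
    abel
  -- dot with star x
  obtain ⟨r₁, hr₁, hd₁⟩ := posdef_complex_aux K₁ hK₁ x hxne
  obtain ⟨r₂, hr₂, hd₂⟩ := posdef_complex_aux K₂ hK₂ x hxne
  obtain ⟨r₃, hr₃, hd₃⟩ := posdef_complex_aux 1 Matrix.PosDef.one x hxne
  have hone : ((1 : Matrix (Fin n) (Fin n) ℝ).map (Complex.ofReal ·)) = 1 := by
    ext i j; simp [Matrix.map_apply, Matrix.one_apply, apply_ite]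
  rw [hone, Matrix.one_mulVec] at hd₃
  have hdot : (r₁ : ℂ) + μ * r₂ + μ ^ 2 * r₃ = 0 := by
    have hdd := congrArg (fun w => star x ⬝ᵥ w) hmain
    simp only [dotProduct_add, dotProduct_smul, smul_eq_mul, dotProduct_zero] at hdd
    rw [← hC₁] at hd₁
    rw [← hC₂] at hd₂
    rw [← hd₁, ← hd₂, ← hd₃]
    linear_combination hdd
  have hr₃' : (r₃ : ℂ) ≠ 0 := by exact_mod_cast hr₃.ne'
  have key : μ ^ 2 + ((r₂ / r₃ : ℝ) : ℂ) * μ + ((r₁ / r₃ : ℝ) : ℂ) = 0 := by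
    push_cast
    field_simp
    linear_combination hdot
  exact quad_re_neg_aux _ _ (div_pos hr₂ hr₃) (div_pos hr₁ hr₃) μ key
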